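/- (Algebraic reduction, S to S−1.) Let S ≥ 2 and suppose A₁S ≠ 0 and x₁, …, x_S : ℝ → ℝ are differentiable and solve the S-species GLV system on [0,∞) with xᵢ(t) > 0 for all i and all t ≥ 0. Then x₁ is twice differentiable on [0,∞), the function y_S is differentiable on [0,∞), and y_S satisfies ẏ_S(t) = b_S·y_S(t) + (Σ_{j=1}^{S−1} A_{Sj}·xⱼ(t) + A_{SS}·y_S(t))·y_S(t) for all t ≥ 0. -/

import Mathlib

/-- (Algebraic reduction, `S` to `S−1`.) For the `S`-species GLV system with
`A 1 S ≠ 0` and positive differentiable solutions on `[0,∞)`, `x 1` is twice differentiable on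
`[0,∞)`, `y_S` is differentiable on `[0,∞)`, and `y_S` satisfies
`ẏ_S = b_S·y_S + (Σ_{j=1}^{S−1} A_{Sj}·xⱼ + A_{SS}·y_S)·y_S` there. -/
theorem glvS_algebraic_reduction
    (S : ℕ) (hS : 2 ≤ S) (b : ℕ → ℝ) (A : ℕ → ℕ → ℝ) (hA1S : A 1 S ≠ 0)
    (x : ℕ → ℝ → ℝ)
    (hdiff : ∀ i ∈ Finset.Icc 1 S, Differentiable ℝ (x i))
    (hpos : ∀ i ∈ Finset.Icc 1 S, ∀ t : ℝ, 0 ≤ t → 0 < x i t)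
    (hode : ∀ i ∈ Finset.Icc 1 S, ∀ t : ℝ, 0 ≤ t →
      deriv (x i) t = b i * x i t + (∑ j ∈ Finset.Icc 1 S, A i j * x j t) * x i t)
    (yS : ℝ → ℝ)
    (hyS : ∀ t : ℝ, yS t = (1 / A 1 S) * ((deriv (x 1) t - b 1 * x 1 t) / x 1 t
      - ∑ j ∈ Finset.Icc 1 (S - 1), A 1 j * x j t)) :
    DifferentiableOn ℝ (deriv (x 1)) (Set.Ici 0) ∧
    DifferentiableOn ℝ yS (Set.Ici 0) ∧
    (∀ t : ℝ, 0 ≤ t →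
      HasDerivWithinAt yS
        (b S * yS t + ((∑ j ∈ Finset.Icc 1 (S - 1), A S j * x j t) + A S S * yS t) * yS t)
        (Set.Ici 0) t) := by

  obtain ⟨m, rfl⟩ : ∃ m, S = m + 1 := ⟨S - 1, by omega⟩
  simp only [Nat.add_sub_cancel] at hyS ⊢
  have hm : (1:ℕ) ≤ m + 1 := by omega
  have mem1 : (1:ℕ) ∈ Finset.Icc 1 (m + 1) := Finset.mem_Icc.mpr ⟨le_rfl, by omega⟩
  have memS : m + 1 ∈ Finset.Icc 1 (m + 1) := Finset.mem_Icc.mpr ⟨by omega, le_rfl⟩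
  have hx1ne : ∀ t : ℝ, 0 ≤ t → x 1 t ≠ 0 := fun t ht => ne_of_gt (hpos 1 mem1 t ht)
  have hkey : ∀ t : ℝ, 0 ≤ t → yS t = x (m + 1) t := by
    intro t ht
    rw [hyS t, hode 1 mem1 t ht, Finset.sum_Icc_succ_top hm]
    field_simp [hx1ne t ht]
    ring
  have hd1 : DifferentiableOn ℝ
      (fun t => b 1 * x 1 t + (∑ j ∈ Finset.Icc 1 (m + 1), A 1 j * x j t) * x 1 t)
      (Set.Ici 0) := by
    apply Differentiable.differentiableOn
    exact ((hdiff 1 mem1).const_mul _).add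
      ((Differentiable.fun_sum fun j hj => (hdiff j hj).const_mul _).mul (hdiff 1 mem1))
  refine ⟨hd1.congr fun t ht => hode 1 mem1 t ht,
    (hdiff (m + 1) memS).differentiableOn.congr fun t ht => hkey t ht, ?_⟩
  intro t ht
  have hd := ((hdiff (m + 1) memS) t).hasDerivAt.hasDerivWithinAt (s := Set.Ici 0)
  rw [hode (m + 1) memS t ht] at hd
  have h2 := hd.congr (fun u hu => hkey u hu) (hkey t ht)
  refine h2.congr_deriv ?_
  rw [hkey t ht, Finset.sum_Icc_succ_top hm]
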